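/- Let X_n = (X_{i,n})_{i=1}^n be i.i.d. ℝ^d-valued random vectors under each P ∈ 𝒫_n, and suppose there exist numbers c_L < c_U, ε > 0, and a coordinate j ∈ {1,…,d} such that for all P ∈ 𝒫_n, inf_{x∈[c_L,c_U]} f_{j,P}(x) > ε, where f_{j,P} : ℝ → [0,∞) is a measurable function satisfying P{X_{ij,n} ∈ [c_L,c_U] ∩ A} = ∫_{[c_L,c_U]∩A} f_{j,P}(x)dx for every Borel A ⊂ ℝ (i.e., the restriction of the law of the j-th coordinate X_{ij,n} to [c_L,c_U] has density f_{j,P} bounded below by ε). Then for any R > 0 there exists c_R > 0 such that for all n ≥ 1 and all P ∈ 𝒫_n: c_R ≤ sup_{t∈ℝ^d:‖t‖>R} (1/(2π²)) E_P[inf_{q∈ℤ}(t'(X_{1,n}−X_{2,n})−2πq)²]. -/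

import Mathlib

open MeasureTheory ProbabilityTheory Real
open scoped BigOperators ENNReal NNReal

noncomputable section

/-- Euclidean space ℝ^d. -/
abbrev Ed (d : ℕ) := EuclideanSpace ℝ (Fin d)

variable {d : ℕ}

/-- The characteristic function of a (Borel) measure on ℝ^d. -/
def charFn (μ : Measure (Ed d)) (t : Ed d) : ℂ :=
  ∫ x, Complex.exp (((inner ℝ t x : ℝ) : ℂ) * Complex.I) ∂μ

/-- Partial derivative in the k-th coordinate direction. -/
def partialD {F : Type*} [NormedAddCommGroup F] [NormedSpace ℝ F]
    (k : Fin d) (f : Ed d → F) : Ed d → F :=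
  fun x => fderiv ℝ f x (EuclideanSpace.single k 1)

/-- Iterated partial derivative `D^ν` for a multi-index ν. -/
def mDeriv {F : Type*} [NormedAddCommGroup F] [NormedSpace ℝ F]
    (ν : Fin d → ℕ) (f : Ed d → F) : Ed d → F :=
  (List.finRange d).foldr (fun k g => (partialD k)^[ν k] g) f

/-- The ν-th cumulant of a measure μ on ℝ^d:
`κ_ν = (−i)^{|ν|} D^ν (log φ_μ)(0)` where φ_μ is the characteristic function. -/
def cumulant (μ : Measure (Ed d)) (ν : Fin d → ℕ) : ℂ :=
  (-Complex.I) ^ (∑ k, ν k) * mDeriv ν (fun t => Complex.log (charFn μ t)) 0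

/-- The finite set of multi-indices ν ∈ ℤ₊^d with |ν| = j. -/
def multiIdx (d j : ℕ) : Finset (Fin d → ℕ) :=
  (Fintype.piFinset fun _ : Fin d => Finset.range (j + 1)).filter fun ν => ∑ k, ν k = j

/-- The differential operator `χ̄_j(−D)` applied to f, where
`χ̄_j(z) = j! Σ_{|ν|=j} (χ_ν/ν!) z^ν`. -/
def chiOpApply (χ : (Fin d → ℕ) → ℂ) (j : ℕ) (f : Ed d → ℂ) : Ed d → ℂ :=
  fun x => (j.factorial : ℂ) * (-1 : ℂ) ^ j *
    ∑ ν ∈ multiIdx d j, (χ ν / ∏ k, ((ν k).factorial : ℂ)) * mDeriv ν f x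

/-- The Edgeworth polynomial operator `P̃_j(−D; {χ_ν})` applied to f:
`P̃_j = Σ_{m=1}^{j} (1/m!) Σ*_{j_1+⋯+j_m=j} ∏_k χ̄_{j_k+2}(−D)/(j_k+2)!`,
encoded as a sum over compositions of j. -/
def edgeworthOp (χ : (Fin d → ℕ) → ℂ) (j : ℕ) (f : Ed d → ℂ) : Ed d → ℂ :=
  fun x => ∑ c : Composition j, ((c.length.factorial : ℂ))⁻¹ *
    (c.blocks.foldr
      (fun jk g => fun y => (((jk + 2).factorial : ℂ))⁻¹ * chiOpApply χ (jk + 2) g y) f) x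

/-- The standard normal density on ℝ^d. -/
def gaussDensity (d : ℕ) (x : Ed d) : ℝ :=
  (2 * π) ^ (-(d : ℝ) / 2) * Real.exp (-‖x‖ ^ 2 / 2)

/-- The density of the order-s Edgeworth signed measure
`Σ_{j=0}^{s−2} n^{−j/2} P̃_j(−D;{χ_ν}) φ(x)`. -/
def edgeworthDensity (χ : (Fin d → ℕ) → ℂ) (n s : ℕ) (x : Ed d) : ℝ :=
  (∑ j ∈ Finset.range (s - 1), (((n : ℝ) ^ (-(j : ℝ) / 2) : ℝ) : ℂ) *
    edgeworthOp χ j (fun y => ((gaussDensity d y : ℝ) : ℂ)) x).re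

/-- The order-s Edgeworth signed measure, as a set function `A ↦ ∫_A (density)`. -/
def edgeworthSM (χ : (Fin d → ℕ) → ℂ) (n s : ℕ) (A : Set (Ed d)) : ℝ :=
  ∫ x in A, edgeworthDensity χ n s x

/-- The standard normal distribution Φ = N(0, I_d) on ℝ^d. -/
def stdGaussian (d : ℕ) : Measure (Ed d) :=
  volume.withDensity fun x => ENNReal.ofReal (gaussDensity d x)

/-- Modulus of continuity `ω_f(x;ε) = sup {|f z − f y| : z,y ∈ B(x;ε)}`. -/
def oscil (f : Ed d → ℝ) (x : Ed d) (ε : ℝ) : ℝ :=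
  sSup {r | ∃ z ∈ Metric.ball x ε, ∃ y ∈ Metric.ball x ε, r = |f z - f y|}

/-- Averaged modulus of continuity `ω̄_f(ε;μ) = ∫ ω_f(x;ε) dμ(x)`. -/
def oscilBar (f : Ed d → ℝ) (ε : ℝ) (μ : Measure (Ed d)) : ℝ :=
  ∫ x, oscil f x ε ∂μ

/-- `M_s(f) = sup_x |f(x)|/(1+‖x‖^s)`. -/
def Msup (s : ℕ) (f : Ed d → ℝ) : ℝ := ⨆ x : Ed d, |f x| / (1 + ‖x‖ ^ s)

/-- The (uncentered) second-moment matrix `E[X X']` of a measure on ℝ^d. -/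
def covMat (μ : Measure (Ed d)) : Matrix (Fin d) (Fin d) ℝ :=
  Matrix.of fun k l => ∫ x, x k * x l ∂μ

/-- The old `Matrix.PosSemidef.sqrt` (removed from Mathlib), with its old definition. -/
def psdSqrt {M : Matrix (Fin d) (Fin d) ℝ} (hM : M.PosSemidef) : Matrix (Fin d) (Fin d) ℝ :=
  (hM.1.eigenvectorUnitary : Matrix (Fin d) (Fin d) ℝ) *
    Matrix.diagonal ((↑) ∘ Real.sqrt ∘ hM.1.eigenvalues) *
    (star hM.1.eigenvectorUnitary : Matrix (Fin d) (Fin d) ℝ)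

open Classical in
/-- Inverse square root of a matrix (junk value if not positive semidefinite). -/
def matInvSqrt (M : Matrix (Fin d) (Fin d) ℝ) : Matrix (Fin d) (Fin d) ℝ :=
  if h : M.PosSemidef then (psdSqrt h)⁻¹ else 1

open Classical in
/-- Square root of a matrix (junk value if not positive semidefinite). -/
def matSqrt (M : Matrix (Fin d) (Fin d) ℝ) : Matrix (Fin d) (Fin d) ℝ :=
  if h : M.PosSemidef then psdSqrt h else 1

/-- Matrix-vector multiplication on Euclidean space. -/
def mulVecE (M : Matrix (Fin d) (Fin d) ℝ) (x : Ed d) : Ed d :=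
  (EuclideanSpace.equiv (Fin d) ℝ).symm (M.mulVec (EuclideanSpace.equiv (Fin d) ℝ x))

/-- Marginal distribution of the i-th coordinate. -/
def marginal {n : ℕ} (P : Measure (Fin n → Ed d)) (i : Fin n) : Measure (Ed d) :=
  P.map fun ω => ω i

/-- `V_{n,P} = (1/n) Σ_i Var_P(X_{i,n})` (for mean-zero coordinates). -/
def Vmat {d : ℕ} (n : ℕ) (P : Measure (Fin n → Ed d)) : Matrix (Fin d) (Fin d) ℝ :=
  (n : ℝ)⁻¹ • ∑ i : Fin n, covMat (marginal P i)

/-- `Q_{n,P}`, the distribution of `n^{−1/2} Σ_i V_{n,P}^{−1/2} X_{i,n}`. -/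
def Qmeas {d : ℕ} (n : ℕ) (P : Measure (Fin n → Ed d)) : Measure (Ed d) :=
  P.map fun ω => (Real.sqrt n)⁻¹ • ∑ i, mulVecE (matInvSqrt (Vmat n P)) (ω i)

/-- `χ̄_{ν,P}`, the average over i of the ν-th cumulant of `V_{n,P}^{−1/2} X_{i,n}`. -/
def chiBar {d : ℕ} (n : ℕ) (P : Measure (Fin n → Ed d)) (ν : Fin d → ℕ) : ℂ :=
  (n : ℂ)⁻¹ * ∑ i : Fin n, cumulant ((marginal P i).map (mulVecE (matInvSqrt (Vmat n P)))) ν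

/-- `ρ_{n,s,P} = (1/n) Σ_i E_P ‖X_{i,n}‖^s`. -/
def rhoM {d : ℕ} (n s : ℕ) (P : Measure (Fin n → Ed d)) : ℝ :=
  (n : ℝ)⁻¹ * ∑ i : Fin n, ∫ ω, ‖ω i‖ ^ s ∂P

/-- The mean weak Cramér condition with parameter (b,c,R) for a collection of
joint distributions of (X_{i,n})_{i=1}^n. -/
def meanWeakCramer {d : ℕ} {n : ℕ} (Ps : Set (Measure (Fin n → Ed d))) (b c R : ℝ) : Prop :=
  ∀ P ∈ Ps, ∀ t : Ed d, R < ‖t‖ →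
    (n : ℝ)⁻¹ * ∑ i : Fin n, ‖charFn (marginal P i) t‖ ≤ 1 - c / ‖t‖ ^ b

/-- The weak Cramér condition with parameter (b,c,R) for a single distribution. -/
def weakCramerMeas (μ : Measure (Ed d)) (b c R : ℝ) : Prop :=
  ∀ t : Ed d, R < ‖t‖ → ‖charFn μ t‖ ≤ 1 - c / ‖t‖ ^ b

/-- The empirical (resampling) measure `(1/n) Σ_j δ_{x_j}`. -/
def empMeas {d n : ℕ} (x : Fin n → Ed d) : Measure (Ed d) :=
  ((n : ℝ≥0∞))⁻¹ • ∑ i : Fin n, Measure.dirac (x i)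

/-- Sample mean. -/
def sMean {d n : ℕ} (x : Fin n → Ed d) : Ed d := (n : ℝ)⁻¹ • ∑ i, x i

/-- Sample covariance matrix `V̂_n`. -/
def Vhat {d n : ℕ} (x : Fin n → Ed d) : Matrix (Fin d) (Fin d) ℝ :=
  (n : ℝ)⁻¹ • ∑ i : Fin n, Matrix.of fun k l => (x i k - sMean x k) * (x i l - sMean x l)

/-- The bootstrap distribution `Q_{n,ℱ_n}`: the conditional distribution, given the
sample x, of `√n V̂_n^{−1/2}(X̄* − X̄)` where `X̄*` is the mean of n i.i.d. draws from
the empirical measure of x. -/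
def bootQ {d n : ℕ} (x : Fin n → Ed d) : Measure (Ed d) :=
  (Measure.pi fun _ : Fin n => empMeas x).map
    fun y => Real.sqrt n • mulVecE (matInvSqrt (Vhat x)) (sMean y - sMean x)

/-- `χ*_ν`, the ν-th cumulant of the conditional distribution of a bootstrap draw
given the sample, i.e. of the empirical measure. -/
def bootChi {d n : ℕ} (x : Fin n → Ed d) (ν : Fin d → ℕ) : ℂ := cumulant (empMeas x) ν

/-- `Q̃_{n,ℱ_n}`, the Edgeworth signed measure built from the bootstrap cumulants. -/
def bootQtilde {d n : ℕ} (s : ℕ) (x : Fin n → Ed d) (A : Set (Ed d)) : ℝ :=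
  edgeworthSM (bootChi x) n s A

/-- Event `ℰ_{n,0}(ρ̄) = {(1/n) Σ ‖X_i‖^s ≤ ρ̄}`. -/
def Ev0 {d : ℕ} (n s : ℕ) (ρ : ℝ) : Set (Fin n → Ed d) :=
  {x | (n : ℝ)⁻¹ * ∑ i, ‖x i‖ ^ s ≤ ρ}

/-- Event `ℰ_{n,1}(c₁) = {smallest eigenvalue of V̂_n ≥ c₁}` (via the quadratic form). -/
def Ev1 {d : ℕ} (n : ℕ) (c₁ : ℝ) : Set (Fin n → Ed d) :=
  {x | ∀ v : Ed d, c₁ * ‖v‖ ^ 2 ≤ (inner ℝ v (mulVecE (Vhat x) v) : ℝ)}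

/-- Event `ℰ_{n,2}(c₂)`: all mixed absolute moments of the sample of order ≤ s are ≤ c₂. -/
def Ev2 {d : ℕ} (n s : ℕ) (c₂ : ℝ) : Set (Fin n → Ed d) :=
  {x | ∀ v : Fin d → ℕ, (∑ k, v k) ≤ s → (n : ℝ)⁻¹ * ∑ i, ∏ k, |x i k| ^ (v k) ≤ c₂}

/-- `ξ(u,v;t) = inf_{q∈ℤ} (t'(u−v) − 2πq)²`. -/
def xiFn {d : ℕ} (t u v : Ed d) : ℝ := ⨅ q : ℤ, ((inner ℝ t (u - v) : ℝ) - 2 * π * (q : ℝ)) ^ 2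

/-- Condition (★): `c_R ≤ sup_{‖t‖>R} (1/(2π²)) E_P[inf_q (t'(X₁−X₂) − 2πq)²]`
for X₁, X₂ i.i.d. with distribution P. -/
def condStar {d : ℕ} (P : Measure (Ed d)) (R cR : ℝ) : Prop :=
  cR ≤ ⨆ t : {t : Ed d // R < ‖t‖},
    (2 * π ^ 2)⁻¹ * ∫ p : Ed d × Ed d, xiFn t.1 p.1 p.2 ∂(P.prod P)


lemma aux_dist {s : ℝ} (hs1 : π/2 ≤ s) (hs2 : s ≤ 3*π/2) (r : ℤ) :
    π/2 ≤ |s - 2*π*(r:ℝ)| := by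
  have hπ := Real.pi_pos
  rcases le_or_gt (r:ℝ) 0 with h | h
  · rw [le_abs]; left; nlinarith
  · have h1 : (1:ℤ) ≤ r := Int.cast_pos.mp h
    have h1' : (1:ℝ) ≤ (r:ℝ) := by exact_mod_cast h1
    rw [le_abs]; right; nlinarith

lemma xiFn_nonneg {d : ℕ} (t u v : Ed d) : 0 ≤ xiFn t u v :=
  Real.iInf_nonneg fun _ => sq_nonneg _

lemma xiFn_le {d : ℕ} (t u v : Ed d) : xiFn t u v ≤ π ^ 2 := by
  have hπ := Real.pi_pos
  set θ : ℝ := (inner ℝ t (u - v) : ℝ) with hθ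
  set q : ℤ := round (θ / (2*π)) with hq
  have hbdd : BddBelow (Set.range fun q : ℤ => (θ - 2*π*(q:ℝ))^2) :=
    ⟨0, by rintro _ ⟨q, rfl⟩; exact sq_nonneg _⟩
  have habs : |θ - 2*π*(q:ℝ)| ≤ π := by
    have h1 : θ - 2*π*(q:ℝ) = (2*π) * (θ/(2*π) - (q:ℝ)) := by field_simp
    rw [h1, abs_mul, abs_of_pos (by positivity : (0:ℝ) < 2*π)]
    have := abs_sub_round (θ / (2*π))
    nlinarith [abs_nonneg (θ/(2*π) - (q:ℝ))]
  have hsq : (θ - 2*π*(q:ℝ))^2 ≤ π^2 := by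
    rw [← sq_abs]; exact pow_le_pow_left₀ (abs_nonneg _) habs 2
  exact le_trans (ciInf_le hbdd q) hsq

lemma xiFn_measurable {d : ℕ} (t : Ed d) :
    Measurable fun p : Ed d × Ed d => xiFn t p.1 p.2 := by
  apply Measurable.iInf
  intro q
  have hc : Continuous fun p : Ed d × Ed d => ((inner ℝ t (p.1 - p.2) : ℝ) - 2*π*(q:ℝ))^2 :=
    ((Continuous.inner continuous_const (continuous_fst.sub continuous_snd)).sub
      continuous_const).pow 2
  exact hc.measurable

lemma xiFn_integrable {d : ℕ} (t : Ed d) (μ : Measure (Ed d × Ed d)) [IsFiniteMeasure μ] :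
    Integrable (fun p => xiFn t p.1 p.2) μ := by
  refine Integrable.mono' (integrable_const (π^2)) (xiFn_measurable t).aestronglyMeasurable ?_
  filter_upwards with p
  rw [Real.norm_eq_abs, abs_of_nonneg (xiFn_nonneg _ _ _)]
  exact xiFn_le _ _ _

lemma xiFn_ge {d : ℕ} (t u v : Ed d)
    (h : ∀ q : ℤ, π/2 ≤ |(inner ℝ t (u - v) : ℝ) - 2*π*(q:ℝ)|) :
    π^2/4 ≤ xiFn t u v := by
  refine le_ciInf fun q => ?_
  have h1 := h q
  have h2 : (π/2)^2 ≤ |(inner ℝ t (u - v) : ℝ) - 2*π*(q:ℝ)|^2 :=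
    pow_le_pow_left₀ (by positivity) h1 2
  rw [sq_abs] at h2
  nlinarith

lemma key_interval {lam cL cU : ℝ} (hlam : 0 < lam) (hgap : 4*π < lam*(cU - cL))
    {x : ℝ} (hx : x ∈ Set.Icc cL cU) :
    ∃ a : ℝ, Set.Icc a (a + π/lam) ⊆ Set.Icc cL cU ∧
      ∀ y ∈ Set.Icc a (a + π/lam), ∀ q : ℤ, π/2 ≤ |lam*(x - y) - 2*π*(q:ℝ)| := by
  have hπ := Real.pi_pos
  have h2π : (0:ℝ) < 2*π := by positivity
  set m : ℤ := ⌈(lam*(x - cU) - π/2) / (2*π)⌉ with hm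
  have h1 : lam*(x - cU) - π/2 ≤ (m:ℝ) * (2*π) :=
    (div_le_iff₀ h2π).mp (Int.le_ceil _)
  have h2 : ((m:ℝ) - 1) * (2*π) < lam*(x - cU) - π/2 :=
    (lt_div_iff₀ h2π).mp (by linarith [Int.ceil_lt_add_one ((lam*(x - cU) - π/2) / (2*π))])
  have hxL := hx.1
  have hxU := hx.2
  have hlo : lam*(x - cU) ≤ 2*π*(m:ℝ) + π/2 := by nlinarith
  have hhi : 2*π*(m:ℝ) + 3*π/2 < lam*(x - cL) := by nlinarith
  refine ⟨x - (2*π*(m:ℝ) + 3*π/2)/lam, ?_, ?_⟩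
  · intro y hy
    obtain ⟨hy1, hy2⟩ := hy
    have h3 : (2*π*(m:ℝ) + 3*π/2)/lam ≤ x - cL :=
      (div_le_iff₀ hlam).mpr (by nlinarith)
    have h4 : x - cU ≤ (2*π*(m:ℝ) + π/2)/lam :=
      (le_div_iff₀ hlam).mpr (by nlinarith)
    have h5 : x - (2*π*(m:ℝ) + 3*π/2)/lam + π/lam = x - (2*π*(m:ℝ) + π/2)/lam := by
      field_simp; ring
    constructor
    · linarith
    · rw [h5] at hy2; linarith
  · intro y hy q
    obtain ⟨hy1, hy2⟩ := hy
    have h5 : x - (2*π*(m:ℝ) + 3*π/2)/lam + π/lam = x - (2*π*(m:ℝ) + π/2)/lam := by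
      field_simp; ring
    rw [h5] at hy2
    have hs1 : 2*π*(m:ℝ) + π/2 ≤ lam*(x - y) := by
      have : (2*π*(m:ℝ) + π/2)/lam ≤ x - y := by linarith
      have := (div_le_iff₀ hlam).mp this
      nlinarith
    have hs2 : lam*(x - y) ≤ 2*π*(m:ℝ) + 3*π/2 := by
      have : x - y ≤ (2*π*(m:ℝ) + 3*π/2)/lam := by linarith
      have := (le_div_iff₀ hlam).mp this
      nlinarith
    have key := aux_dist (s := lam*(x - y) - 2*π*(m:ℝ)) (by linarith) (by linarith) (q - m)
    have : lam*(x - y) - 2*π*(m:ℝ) - 2*π*((q - m : ℤ):ℝ) = lam*(x - y) - 2*π*(q:ℝ) := by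
      push_cast; ring
    rwa [this] at key

/-- **Proposition 3.2(ii).** If for each `P ∈ 𝒫ₙ` the law of the j-th coordinate restricted
to `[c_L, c_U]` has a density `f_{j,P}` bounded below on `[c_L, c_U]` by more than ε, then
condition (★) holds for some `c_R > 0`: for all `n ≥ 1` and all `P ∈ 𝒫ₙ`,
`c_R ≤ sup_{‖t‖>R} (1/(2π²)) E_P[inf_{q∈ℤ}(t'(X₁−X₂) − 2πq)²]`. -/
theorem condStar_of_density_lower_bound
    (d : ℕ) (hd : 1 ≤ d)
    (Ps : ℕ → Set (Measure (Ed d)))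
    (hprob : ∀ n, ∀ P ∈ Ps n, IsProbabilityMeasure P)
    (cL cU ε : ℝ) (hLU : cL < cU) (hε : 0 < ε) (j : Fin d)
    (hdens : ∀ n, 1 ≤ n → ∀ P ∈ Ps n, ∃ f : ℝ → ℝ, Measurable f ∧
      (∀ A : Set ℝ, MeasurableSet A →
        (P {x : Ed d | x j ∈ Set.Icc cL cU ∩ A}).toReal =
          ∫ y in Set.Icc cL cU ∩ A, f y) ∧
      ε < ⨅ y : Set.Icc cL cU, f y)
    (R : ℝ) (hR : 0 < R) :
    ∃ cR : ℝ, 0 < cR ∧ ∀ n, 1 ≤ n → ∀ P ∈ Ps n, condStar P R cR := by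
  have hπ := Real.pi_pos
  have hwid : 0 < cU - cL := sub_pos.mpr hLU
  set lam : ℝ := R + 1 + 4*π/(cU - cL) with hlam_def
  have hlam : 0 < lam := by positivity
  have hlamR : R < lam := by
    have h0 : 0 < 4*π/(cU - cL) := by positivity
    simp only [hlam_def]; linarith
  have hgap : 4*π < lam*(cU - cL) := by
    have h1 : lam*(cU - cL) = (R+1)*(cU - cL) + 4*π := by
      rw [hlam_def]; field_simp
    nlinarith [mul_pos (show (0:ℝ) < R+1 by linarith) hwid]
  refine ⟨ε^2*π*(cU - cL)/(32*lam), by positivity, ?_⟩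
  intro n hn P hP
  haveI hPP : IsProbabilityMeasure P := hprob n P hP
  obtain ⟨f, hfm, hfeq, hfinf⟩ := hdens n hn P hP
  have hfε : ∀ y ∈ Set.Icc cL cU, ε ≤ f y := by
    intro y hy
    by_cases hb : BddBelow (Set.range fun y : Set.Icc cL cU => f y)
    · exact le_of_lt (lt_of_lt_of_le hfinf (ciInf_le hb ⟨y, hy⟩))
    · rw [Real.iInf_of_not_bddBelow hb] at hfinf; linarith
  have hIccM : MeasurableSet (Set.Icc cL cU) := measurableSet_Icc
  have hIccFin : volume (Set.Icc cL cU) < ∞ := by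
    rw [Real.volume_Icc]; exact ENNReal.ofReal_lt_top
  -- choose the truncation level M
  obtain ⟨M, hM⟩ : ∃ M : ℕ, volume (Set.Icc cL cU ∩ {y | (M:ℝ) < f y})
      < ENNReal.ofReal (min (π/(2*lam)) ((cU - cL)/2)) := by
    have hmeas : ∀ M : ℕ, NullMeasurableSet (Set.Icc cL cU ∩ {y | (M:ℝ) < f y}) volume :=
      fun M => (hIccM.inter (measurableSet_lt measurable_const hfm)).nullMeasurableSet
    have hanti : Antitone fun M : ℕ => Set.Icc cL cU ∩ {y | (M:ℝ) < f y} := by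
      intro a b hab
      refine Set.inter_subset_inter_right _ fun y hy => ?_
      simp only [Set.mem_setOf_eq] at hy ⊢
      exact lt_of_le_of_lt (by exact_mod_cast hab : (a:ℝ) ≤ (b:ℝ)) hy
    have hfin : ∃ M : ℕ, volume (Set.Icc cL cU ∩ {y | (M:ℝ) < f y}) ≠ ∞ :=
      ⟨0, (lt_of_le_of_lt (measure_mono Set.inter_subset_left) hIccFin).ne⟩
    have htend := tendsto_measure_iInter_atTop hmeas hanti hfin
    have hempty : (⋂ M : ℕ, Set.Icc cL cU ∩ {y | (M:ℝ) < f y}) = ∅ := by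
      rw [Set.eq_empty_iff_forall_notMem]
      intro y hy
      obtain ⟨M, hMy⟩ := exists_nat_gt (f y)
      exact absurd ((Set.mem_iInter.mp hy M).2) (not_lt.mpr hMy.le)
    rw [hempty, measure_empty] at htend
    have hpos : (0:ℝ≥0∞) < ENNReal.ofReal (min (π/(2*lam)) ((cU - cL)/2)) :=
      ENNReal.ofReal_pos.mpr (lt_min (by positivity) (by positivity))
    exact (htend.eventually_lt_const hpos).exists
  set A : Set ℝ := Set.Icc cL cU ∩ {y | f y ≤ (M:ℝ)} with hA_def
  have hAm : MeasurableSet A := hIccM.inter (measurableSet_le hfm measurable_const)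
  have hAsub : A ⊆ Set.Icc cL cU := Set.inter_subset_left
  have hdiff : Set.Icc cL cU \ A = Set.Icc cL cU ∩ {y | (M:ℝ) < f y} := by
    ext y
    simp only [hA_def, Set.mem_diff, Set.mem_inter_iff, Set.mem_setOf_eq, not_and, not_le]
    tauto
  have hvol_diff : volume (Set.Icc cL cU \ A) ≤ ENNReal.ofReal (min (π/(2*lam)) ((cU - cL)/2)) := by
    rw [hdiff]; exact hM.le
  have hvolA : ENNReal.ofReal ((cU - cL)/2) ≤ volume A := by
    have hsplit : volume (Set.Icc cL cU) ≤ volume A + volume (Set.Icc cL cU \ A) := by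
      refine le_trans (measure_mono fun y hy => ?_) (measure_union_le _ _)
      by_cases h : y ∈ A
      · exact Or.inl h
      · exact Or.inr ⟨hy, h⟩
    rw [Real.volume_Icc] at hsplit
    have h2 : ENNReal.ofReal (cU - cL)
        = ENNReal.ofReal ((cU - cL)/2) + ENNReal.ofReal ((cU - cL)/2) := by
      rw [← ENNReal.ofReal_add (by positivity) (by positivity)]; norm_num
    have h3 : volume (Set.Icc cL cU \ A) ≤ ENNReal.ofReal ((cU - cL)/2) :=
      le_trans hvol_diff (ENNReal.ofReal_le_ofReal (min_le_right _ _))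
    have h4 : ENNReal.ofReal ((cU - cL)/2) + ENNReal.ofReal ((cU - cL)/2)
        ≤ volume A + ENNReal.ofReal ((cU - cL)/2) := by
      calc ENNReal.ofReal ((cU - cL)/2) + ENNReal.ofReal ((cU - cL)/2)
          = ENNReal.ofReal (cU - cL) := h2.symm
        _ ≤ volume A + volume (Set.Icc cL cU \ A) := hsplit
        _ ≤ volume A + ENNReal.ofReal ((cU - cL)/2) := by gcongr
    exact (ENNReal.add_le_add_iff_right ENNReal.ofReal_ne_top).mp h4
  -- lower bound for P-probabilities of coordinate events inside A
  have hPbound : ∀ S : Set ℝ, MeasurableSet S →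
      ENNReal.ofReal (ε * (volume (A ∩ S)).toReal) ≤ P {v : Ed d | v j ∈ A ∩ S} := by
    intro S hS
    have hASm : MeasurableSet (A ∩ S) := hAm.inter hS
    have hsub : A ∩ S ⊆ Set.Icc cL cU := fun y hy => hy.1.1
    have hsfin : volume (A ∩ S) ≠ ∞ := (lt_of_le_of_lt (measure_mono hsub) hIccFin).ne
    have hAS : Set.Icc cL cU ∩ ({y | f y ≤ (M:ℝ)} ∩ S) = A ∩ S := by
      ext y
      simp only [hA_def, Set.mem_inter_iff, Set.mem_setOf_eq]
      tauto
    have heq := hfeq ({y | f y ≤ (M:ℝ)} ∩ S) ((measurableSet_le hfm measurable_const).inter hS)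
    rw [hAS] at heq
    have hintf : IntegrableOn f (A ∩ S) := by
      refine Measure.integrableOn_of_bounded (M := (M:ℝ)) hsfin hfm.aestronglyMeasurable ?_
      filter_upwards [ae_restrict_mem hASm] with y hy
      rw [Real.norm_eq_abs, abs_of_nonneg (le_trans hε.le (hfε y (hsub hy)))]
      exact hy.1.2
    have hc : IntegrableOn (fun _ => ε) (A ∩ S) volume :=
      integrableOn_const hsfin
    have hlow : ε * (volume (A ∩ S)).toReal ≤ (P {x : Ed d | x j ∈ A ∩ S}).toReal := by
      rw [heq]
      calc ε * (volume (A ∩ S)).toReal = ∫ _ in A ∩ S, ε := by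
            rw [setIntegral_const, smul_eq_mul, mul_comm]; rfl
        _ ≤ ∫ y in A ∩ S, f y :=
            setIntegral_mono_on hc hintf hASm fun y hy => hfε y (hsub hy)
    calc ENNReal.ofReal (ε * (volume (A ∩ S)).toReal)
        ≤ ENNReal.ofReal ((P {x : Ed d | x j ∈ A ∩ S}).toReal) := ENNReal.ofReal_le_ofReal hlow
      _ = P {x : Ed d | x j ∈ A ∩ S} := ENNReal.ofReal_toReal (measure_ne_top P _)
  -- the "good phase" sets
  set C : ℝ → Set ℝ := fun x => {y | ∀ q : ℤ, π/2 ≤ |lam*(x - y) - 2*π*(q:ℝ)|} with hC_def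
  have hCm : ∀ x, MeasurableSet (C x) := by
    intro x
    have hCeq : C x = ⋂ q : ℤ, {y | π/2 ≤ |lam*(x - y) - 2*π*(q:ℝ)|} := by
      ext y; simp [hC_def, Set.mem_iInter]
    rw [hCeq]
    refine MeasurableSet.iInter fun q => measurableSet_le measurable_const ?_
    exact ((continuous_const.mul (continuous_const.sub continuous_id)).sub
      continuous_const).abs.measurable
  have hvolC : ∀ x ∈ A, ENNReal.ofReal (π/(2*lam)) ≤ volume (A ∩ C x) := by
    intro x hx
    obtain ⟨a, haI, haC⟩ := key_interval hlam hgap hx.1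
    have hIvol : volume (Set.Icc a (a + π/lam)) = ENNReal.ofReal (π/lam) := by
      rw [Real.volume_Icc]; congr 1; ring
    have h1 : volume (Set.Icc a (a + π/lam)) ≤ volume (A ∩ C x) + volume (Set.Icc cL cU \ A) := by
      refine le_trans (measure_mono fun y hy => ?_) (measure_union_le _ _)
      by_cases h : y ∈ Set.Icc cL cU \ A
      · exact Or.inr h
      · refine Or.inl ⟨?_, fun q => haC y hy q⟩
        by_contra hcon
        exact h ⟨haI hy, hcon⟩
    have h2 : volume (Set.Icc cL cU \ A) ≤ ENNReal.ofReal (π/(2*lam)) :=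
      hvol_diff.trans (ENNReal.ofReal_le_ofReal (min_le_left _ _))
    have h3 : ENNReal.ofReal (π/lam) = ENNReal.ofReal (π/(2*lam)) + ENNReal.ofReal (π/(2*lam)) := by
      rw [← ENNReal.ofReal_add (by positivity) (by positivity)]
      congr 1; field_simp; ring
    have h4 : ENNReal.ofReal (π/(2*lam)) + ENNReal.ofReal (π/(2*lam))
        ≤ volume (A ∩ C x) + ENNReal.ofReal (π/(2*lam)) := by
      rw [← h3, ← hIvol]
      exact h1.trans (by gcongr)
    exact (ENNReal.add_le_add_iff_right ENNReal.ofReal_ne_top).mp h4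
  have hslice : ∀ x ∈ A, ENNReal.ofReal (ε * (π/(2*lam))) ≤ P {v : Ed d | v j ∈ A ∩ C x} := by
    intro x hx
    refine le_trans ?_ (hPbound (C x) (hCm x))
    apply ENNReal.ofReal_le_ofReal
    have hfin : volume (A ∩ C x) ≠ ∞ :=
      (lt_of_le_of_lt (measure_mono fun y hy => hAsub hy.1) hIccFin).ne
    have h5 := ENNReal.toReal_mono hfin (hvolC x hx)
    rw [ENNReal.toReal_ofReal (by positivity)] at h5
    exact mul_le_mul_of_nonneg_left h5 hε.le
  have hAP : ENNReal.ofReal (ε * ((cU - cL)/2)) ≤ P {v : Ed d | v j ∈ A} := by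
    have h6 := hPbound Set.univ MeasurableSet.univ
    rw [Set.inter_univ] at h6
    refine le_trans ?_ h6
    apply ENNReal.ofReal_le_ofReal
    have hfinA : volume A ≠ ∞ := (lt_of_le_of_lt (measure_mono hAsub) hIccFin).ne
    have h7 := ENNReal.toReal_mono hfinA hvolA
    rw [ENNReal.toReal_ofReal (by positivity)] at h7
    exact mul_le_mul_of_nonneg_left h7 hε.le
  -- the joint event
  set S : Set (Ed d × Ed d) := {p | p.1 j ∈ A ∧ p.2 j ∈ A ∩ C (p.1 j)} with hS_def
  have hcoord1 : Measurable fun p : Ed d × Ed d => p.1 j :=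
    ((EuclideanSpace.proj j).continuous.comp continuous_fst).measurable
  have hcoord2 : Measurable fun p : Ed d × Ed d => p.2 j :=
    ((EuclideanSpace.proj j).continuous.comp continuous_snd).measurable
  have hSm : MeasurableSet S := by
    have hSeq : S = ((fun p : Ed d × Ed d => p.1 j) ⁻¹' A) ∩
        (((fun p : Ed d × Ed d => p.2 j) ⁻¹' A) ∩
        ⋂ q : ℤ, {p : Ed d × Ed d | π/2 ≤ |lam*(p.1 j - p.2 j) - 2*π*(q:ℝ)|}) := by
      ext p
      simp only [hS_def, hC_def, Set.mem_inter_iff, Set.mem_preimage, Set.mem_iInter,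
        Set.mem_setOf_eq]
    rw [hSeq]
    refine (hcoord1 hAm).inter ((hcoord2 hAm).inter (MeasurableSet.iInter fun q => ?_))
    refine measurableSet_le measurable_const ?_
    exact ((measurable_const.mul (hcoord1.sub hcoord2)).sub measurable_const).abs
  -- lower bound the product measure of S
  have hprod : ENNReal.ofReal (ε*(π/(2*lam))) * ENNReal.ofReal (ε*((cU - cL)/2))
      ≤ (P.prod P) S := by
    rw [Measure.prod_apply hSm]
    have hmeasfn : Measurable fun u : Ed d => P (Prod.mk u ⁻¹' S) :=
      measurable_measure_prodMk_left hSm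
    calc ENNReal.ofReal (ε*(π/(2*lam))) * ENNReal.ofReal (ε*((cU - cL)/2))
        ≤ ENNReal.ofReal (ε*(π/(2*lam))) * P {u : Ed d | u j ∈ A} :=
          mul_le_mul_right hAP _
      _ = ∫⁻ _ in {u : Ed d | u j ∈ A}, ENNReal.ofReal (ε*(π/(2*lam))) ∂P :=
          (setLIntegral_const _ _).symm
      _ ≤ ∫⁻ u in {u : Ed d | u j ∈ A}, P (Prod.mk u ⁻¹' S) ∂P := by
          refine setLIntegral_mono hmeasfn fun u hu => ?_
          have hpre : Prod.mk u ⁻¹' S = {v : Ed d | v j ∈ A ∩ C (u j)} := by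
            ext v
            simp only [hS_def, Set.mem_preimage, Set.mem_setOf_eq]
            exact and_iff_right hu
          rw [hpre]
          exact hslice (u j) hu
      _ ≤ ∫⁻ u, P (Prod.mk u ⁻¹' S) ∂P := setLIntegral_le_lintegral _ _
  set β : ℝ := ε^2*π*(cU - cL)/(4*lam) with hβ
  have hprod' : β ≤ ((P.prod P) S).toReal := by
    have hmul : ENNReal.ofReal (ε*(π/(2*lam))) * ENNReal.ofReal (ε*((cU - cL)/2))
        = ENNReal.ofReal β := by
      rw [← ENNReal.ofReal_mul (by positivity)]
      congr 1; rw [hβ]; field_simp; ring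
    have hfin : (P.prod P) S ≠ ∞ := measure_ne_top _ _
    have h8 := ENNReal.toReal_mono hfin (hmul ▸ hprod)
    rwa [ENNReal.toReal_ofReal (by positivity)] at h8
  -- the frequency vector
  set t₀ : Ed d := EuclideanSpace.single j lam with ht₀
  have hnorm : R < ‖t₀‖ := by
    rw [ht₀, EuclideanSpace.norm_single, Real.norm_eq_abs, abs_of_pos hlam]
    exact hlamR
  have hinner : ∀ u v : Ed d, (inner ℝ t₀ (u - v) : ℝ) = lam * (u j - v j) := by
    intro u v
    rw [ht₀, EuclideanSpace.inner_single_left]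
    simp
  have hlowS : ∀ p ∈ S, π^2/4 ≤ xiFn t₀ p.1 p.2 := by
    intro p hp
    refine xiFn_ge _ _ _ fun q => ?_
    rw [hinner]
    exact hp.2.2 q
  have hintegral : π^2/4 * ((P.prod P) S).toReal ≤ ∫ p, xiFn t₀ p.1 p.2 ∂(P.prod P) := by
    have hind : ∫ p, S.indicator (fun _ => π^2/4) p ∂(P.prod P)
        = ((P.prod P) S).toReal * (π^2/4) := by
      rw [integral_indicator_const _ hSm]; rw [smul_eq_mul]; rfl
    have hmono : ∫ p, S.indicator (fun _ => π^2/4) p ∂(P.prod P)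
        ≤ ∫ p, xiFn t₀ p.1 p.2 ∂(P.prod P) := by
      refine integral_mono ((integrable_const (π^2/4)).indicator hSm) (xiFn_integrable t₀ _) ?_
      intro p
      by_cases hp : p ∈ S
      · rw [Set.indicator_of_mem hp]; exact hlowS p hp
      · rw [Set.indicator_of_notMem hp]; exact xiFn_nonneg _ _ _
    rw [mul_comm, ← hind]
    exact hmono
  have hval : ε^2*π*(cU - cL)/(32*lam)
      ≤ (2*π^2)⁻¹ * ∫ p : Ed d × Ed d, xiFn t₀ p.1 p.2 ∂(P.prod P) := by
    have h9 : π^2/4 * β ≤ ∫ p, xiFn t₀ p.1 p.2 ∂(P.prod P) :=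
      le_trans (mul_le_mul_of_nonneg_left hprod' (by positivity)) hintegral
    calc ε^2*π*(cU - cL)/(32*lam) = (2*π^2)⁻¹ * (π^2/4 * β) := by
          rw [hβ]; field_simp; ring
      _ ≤ (2*π^2)⁻¹ * ∫ p, xiFn t₀ p.1 p.2 ∂(P.prod P) :=
          mul_le_mul_of_nonneg_left h9 (by positivity)
  show ε^2*π*(cU - cL)/(32*lam) ≤ ⨆ t : {t : Ed d // R < ‖t‖},
    (2 * π ^ 2)⁻¹ * ∫ p : Ed d × Ed d, xiFn t.1 p.1 p.2 ∂(P.prod P)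
  have hbdd : BddAbove (Set.range fun t : {t : Ed d // R < ‖t‖} =>
      (2*π^2)⁻¹ * ∫ p : Ed d × Ed d, xiFn t.1 p.1 p.2 ∂(P.prod P)) := by
    refine ⟨(2*π^2)⁻¹ * π^2, ?_⟩
    rintro _ ⟨t, rfl⟩
    have h1 : ∫ p : Ed d × Ed d, xiFn t.1 p.1 p.2 ∂(P.prod P) ≤ π^2 := by
      have h2 := integral_mono (xiFn_integrable t.1 (P.prod P)) (integrable_const (π^2))
        (fun p => xiFn_le t.1 p.1 p.2)
      rwa [integral_const, probReal_univ, one_smul] at h2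
    exact mul_le_mul_of_nonneg_left h1 (by positivity)
  exact le_trans hval (le_ciSup hbdd ⟨t₀, hnorm⟩)
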